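/- Let A be the adjacency matrix of an undirected graph with d = A·1 and 1ᵀd > 0, let 0 < α < 1/ρ(A) where ρ(A) is the spectral radius, and let x solve (I − αA)x = 1 (Katz centrality). Then (dᵀx)/(1ᵀd) ≥ (1ᵀx)/n, with equality if and only if the graph is regular. -/

import Mathlib

open Matrix

lemma aux_spectrum_shift {m : Type*} [Fintype m] [DecidableEq m]
    {A : Matrix m m ℝ} {α t : ℝ} (hα : α ≠ 0)
    (ht : t ∈ spectrum ℝ (1 - α • A)) : (1 - t) / α ∈ spectrum ℝ A := by
  rw [spectrum.mem_iff] at ht ⊢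
  intro hu
  apply ht
  have hkey : algebraMap ℝ (Matrix m m ℝ) t - (1 - α • A)
      = (-α) • (algebraMap ℝ (Matrix m m ℝ) ((1 - t)/α) - A) := by
    rw [Algebra.algebraMap_eq_smul_one, Algebra.algebraMap_eq_smul_one]
    match_scalars
    · field_simp; ring
    · field_simp
  rw [hkey]
  rw [Matrix.isUnit_iff_isUnit_det] at hu ⊢
  rw [Matrix.det_smul, isUnit_iff_ne_zero]
  rw [isUnit_iff_ne_zero] at hu
  exact mul_ne_zero (pow_ne_zero _ (neg_ne_zero.mpr hα)) hu

lemma aux_posDef {m : Type*} [Fintype m] [DecidableEq m]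
    {B : Matrix m m ℝ} (hB : B.IsHermitian) (h : ∀ i, 0 < hB.eigenvalues i) :
    B.PosDef := by
  refine Matrix.PosDef.of_dotProduct_mulVec_pos hB (fun v hv => ?_)
  set U : Matrix m m ℝ := (hB.eigenvectorUnitary : Matrix m m ℝ) with hU
  have hUU : U * star U = 1 := (Matrix.mem_unitaryGroup_iff).mp hB.eigenvectorUnitary.2
  set w : m → ℝ := star U *ᵥ v with hw
  have hwv : U *ᵥ w = v := by rw [hw, Matrix.mulVec_mulVec, hUU, Matrix.one_mulVec]
  have hwne : w ≠ 0 := by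
    intro h0; apply hv; rw [← hwv, h0, Matrix.mulVec_zero]
  have hD : (Matrix.diagonal (RCLike.ofReal ∘ hB.eigenvalues) : Matrix m m ℝ).PosDef :=
    Matrix.PosDef.diagonal (fun i => by simpa using h i)
  have hsv : star w = star v ᵥ* U := by
    rw [hw, Matrix.star_mulVec, Matrix.star_eq_conjTranspose,
      Matrix.conjTranspose_conjTranspose]
  have hq : star v ⬝ᵥ B *ᵥ v
      = star w ⬝ᵥ (Matrix.diagonal (RCLike.ofReal ∘ hB.eigenvalues) *ᵥ w) := by
    conv_lhs => rw [hB.spectral_theorem, Unitary.conjStarAlgAut_apply]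
    rw [← Matrix.mulVec_mulVec, ← Matrix.mulVec_mulVec, Matrix.dotProduct_mulVec, ← hsv, hw]
  rw [hq]
  exact hD.dotProduct_mulVec_pos hwne

set_option maxHeartbeats 1000000 in
theorem global_friendship_paradox_katz
    (n : ℕ) (hn : 0 < n) (A : Matrix (Fin n) (Fin n) ℝ)
    (hsym : A.IsSymm)
    (h01 : ∀ i j, A i j = 0 ∨ A i j = 1)
    (hdiag : ∀ i, A i i = 0)
    (d : Fin n → ℝ) (hd : d = A.mulVec (fun _ => 1))
    (hdpos : 0 < ∑ i, d i)
    (α : ℝ) (hα : 0 < α)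
    (hspec : ∀ μ ∈ spectrum ℝ A, α * |μ| < 1)
    (x : Fin n → ℝ) (hx : (1 - α • A).mulVec x = (fun _ => 1)) :
    (∑ i, d i * x i) / (∑ i, d i) ≥ (∑ i, x i) / (n : ℝ) ∧
    ((∑ i, d i * x i) / (∑ i, d i) = (∑ i, x i) / (n : ℝ) ↔ ∀ i j, d i = d j) := by
  classical
  have hn' : (0:ℝ) < n := by exact_mod_cast hn
  set o : Fin n → ℝ := (fun _ => 1) with ho
  set B : Matrix (Fin n) (Fin n) ℝ := 1 - α • A with hBdef
  have hx' : B *ᵥ x = o := hx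
  have hBsymm : Bᵀ = B := by
    rw [hBdef, Matrix.transpose_sub, Matrix.transpose_one, Matrix.transpose_smul, hsym]
  have hBher : B.IsHermitian := by
    rw [Matrix.IsHermitian, Matrix.conjTranspose_eq_transpose_of_trivial]; exact hBsymm
  have hBpd : B.PosDef := by
    refine aux_posDef hBher (fun i => ?_)
    have h2 := aux_spectrum_shift (A := A) (ne_of_gt hα)
      (hBher.eigenvalues_mem_spectrum_real i)
    have h3 := hspec _ h2
    rw [abs_div, abs_of_pos hα, mul_comm, div_mul_cancel₀ _ (ne_of_gt hα)] at h3
    have h4 := (abs_lt.mp h3).2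
    linarith
  have hone : ∀ v : Fin n → ℝ, star v = v := fun v => funext fun i => star_trivial _
  have hoz : o ≠ 0 := by
    intro h0
    have := congrFun h0 ⟨0, hn⟩
    simp [ho] at this
  set S := ∑ i, x i with hSdef
  set m1 := ∑ i, d i with hm1def
  have hqxx : x ⬝ᵥ B *ᵥ x = S := by
    rw [hx']; simp [dotProduct, ho, hSdef]
  have hqox : o ⬝ᵥ B *ᵥ x = n := by
    rw [hx']; simp [dotProduct, ho]
  have hqxo : x ⬝ᵥ B *ᵥ o = n := by
    rw [Matrix.dotProduct_mulVec, ← Matrix.mulVec_transpose, hBsymm, hx']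
    simp [dotProduct, ho]
  set T := o ⬝ᵥ B *ᵥ o with hTdef
  have hTpos : 0 < T := by
    have := hBpd.dotProduct_mulVec_pos hoz
    rwa [hone o] at this
  have hBo : B *ᵥ o = o - α • d := by
    rw [hBdef, Matrix.sub_mulVec, Matrix.one_mulVec, Matrix.smul_mulVec, ← hd]
  have hT : T = n - α * m1 := by
    rw [hTdef, hBo]
    simp [dotProduct, ho, hm1def, Finset.sum_sub_distrib, Finset.mul_sum]
  have hxo2 : x ⬝ᵥ o = S := by simp [dotProduct, ho, hSdef]
  have hoo : o ⬝ᵥ o = (n:ℝ) := by simp [dotProduct, ho]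
  have hAx : A *ᵥ x = α⁻¹ • (x - o) := by
    have h9 : x - α • (A *ᵥ x) = o := by
      rw [← hx', hBdef, Matrix.sub_mulVec, Matrix.one_mulVec, Matrix.smul_mulVec]
    funext i
    have h10 := congrFun h9 i
    simp [ho] at h10 ⊢
    field_simp
    linarith
  have hdx : ∑ i, d i * x i = (S - n) / α := by
    have h1 : ∑ i, d i * x i = d ⬝ᵥ x := rfl
    rw [h1, hd, dotProduct_comm, Matrix.dotProduct_mulVec, ← Matrix.mulVec_transpose,
      hsym, hAx, smul_dotProduct, sub_dotProduct, hxo2, hoo, smul_eq_mul,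
      div_eq_inv_mul]
  set w : Fin n → ℝ := T • x - (n : ℝ) • o with hwdef
  have hqw : w ⬝ᵥ B *ᵥ w = T * (T * S - (n:ℝ) * n) := by
    rw [hwdef]
    rw [Matrix.mulVec_sub, Matrix.mulVec_smul, Matrix.mulVec_smul]
    rw [sub_dotProduct, smul_dotProduct, smul_dotProduct,
      dotProduct_sub, dotProduct_sub, dotProduct_smul,
      dotProduct_smul, dotProduct_smul, dotProduct_smul]
    rw [hqxx, hqox, hqxo, ← hTdef]
    simp only [smul_eq_mul]
    ring
  have hw0 : 0 ≤ w ⬝ᵥ B *ᵥ w := by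
    have := hBpd.posSemidef.dotProduct_mulVec_nonneg w
    rwa [hone w] at this
  have hkey : (n:ℝ) * n ≤ T * S := by nlinarith [hqw, hw0, hTpos]
  have hm1pos : 0 < m1 := hdpos
  constructor
  · rw [hdx, ge_iff_le, div_le_div_iff₀ hn' hm1pos, div_mul_eq_mul_div, le_div_iff₀ hα]
    nlinarith [hkey, hT]
  constructor
  · intro heq
    rw [hdx] at heq
    have h2 : T * S = (n:ℝ) * n := by
      rw [hT]
      field_simp at heq
      nlinarith [heq]
    have hw0' : w = 0 := by
      by_contra hne
      have := hBpd.dotProduct_mulVec_pos hne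
      rw [hone w, hqw, h2, sub_self, mul_zero] at this
      exact lt_irrefl _ this
    have hxc : x = ((n:ℝ) / T) • o := by
      funext i
      have := congrFun hw0' i
      simp [hwdef, ho] at this ⊢
      field_simp
      linarith
    have hco : ∀ i, ((n:ℝ) / T) * (1 - α * d i) = 1 := by
      intro i
      have h5 := congrFun hx' i
      rw [hxc, Matrix.mulVec_smul, hBo] at h5
      simpa [ho] using h5
    intro i j
    have hcne : ((n:ℝ) / T) ≠ 0 := ne_of_gt (div_pos hn' hTpos)
    have h6 := (hco i).trans (hco j).symm
    have h7 := mul_left_cancel₀ hcne h6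
    have : α * d i = α * d j := by linarith
    exact mul_left_cancel₀ (ne_of_gt hα) this
  · intro hconst
    set δ := d ⟨0, hn⟩ with hδ
    have hdm : m1 = n * δ := by
      rw [hm1def, Finset.sum_congr rfl (fun i _ => hconst i ⟨0, hn⟩), Finset.sum_const,
        Finset.card_univ, Fintype.card_fin, nsmul_eq_mul]
    have h1αδ : 0 < 1 - α * δ := by
      have hTn : T = n * (1 - α * δ) := by rw [hT, hdm]; ring
      nlinarith [hTpos, hTn, hn']
    set c := (1 - α * δ)⁻¹ with hc
    have hBco : B *ᵥ (c • o) = o := by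
      rw [Matrix.mulVec_smul, hBo]
      funext i
      rw [hc]
      simp [ho, hconst i ⟨0, hn⟩, ← hδ]
      field_simp
    have hxc : x = c • o := by
      have h0 : B *ᵥ (x - c • o) = 0 := by
        rw [Matrix.mulVec_sub, hx', hBco, sub_self]
      by_contra hne
      have hne' : x - c • o ≠ 0 := sub_ne_zero.mpr hne
      have := hBpd.dotProduct_mulVec_pos hne'
      rw [hone, h0, dotProduct_zero] at this
      exact lt_irrefl _ this
    have hxi : ∀ i, x i = c := fun i => by rw [hxc]; simp [ho]
    have hS : S = n * c := by
      rw [hSdef, Finset.sum_congr rfl (fun i _ => hxi i), Finset.sum_const,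
        Finset.card_univ, Fintype.card_fin, nsmul_eq_mul]
    have hDX : ∑ i, d i * x i = m1 * c := by
      rw [Finset.sum_congr rfl (fun i (_ : i ∈ Finset.univ) => by rw [hxi i]), ← Finset.sum_mul,
        ← hm1def]
    rw [hDX, hS]
    field_simp [ne_of_gt hm1pos, ne_of_gt hn']
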